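/- Under uniform label noise with rate τ, the noisy expected margin loss decomposes as E_{X,Ỹ} ψ(Ỹ f(X)) = (1 - 2τ)·E_{X,Y} ψ(Y f(X)) + τ·E_X[ψ(f(X)) + ψ(-f(X))]. In particular, if ψ(t) + ψ(-t) = K for a constant K, the noisy risk equals (1-2τ) times the clean risk plus the constant τK, so the minimizers of clean and noisy risk coincide when τ < 1/2. -/

import Mathlib

open MeasureTheory

/-- Under uniform label noise with rate τ, the noisy risk decomposes as
(1-2τ)·(clean risk) + τ·E[ψ(f(X)) + ψ(-f(X))]; with a symmetric loss
ψ(t) + ψ(-t) = K this is (1-2τ)·(clean risk) + τK, so for τ < 1/2 the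
minimizers of the clean and noisy risks coincide. -/
theorem uniform_noise_risk_decomposition
    {X : Type*} [MeasurableSpace X] (μ : Measure X) [IsProbabilityMeasure μ]
    (τ : ℝ) (hτ : τ < 1/2) (η : X → ℝ) (hη : ∀ x, η x ∈ Set.Icc (0:ℝ) 1)
    (ψ : ℝ → ℝ) (K : ℝ) (hK : ∀ t, ψ t + ψ (-t) = K)
    (cleanRisk noisyRisk : (X → ℝ) → ℝ)
    (hclean : ∀ f, cleanRisk f =
      ∫ x, (η x * ψ (f x) + (1 - η x) * ψ (-(f x))) ∂μ)
    (hnoisy : ∀ f, noisyRisk f =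
      ∫ x, (((1 - τ) * η x + τ * (1 - η x)) * ψ (f x) +
            ((1 - τ) * (1 - η x) + τ * η x) * ψ (-(f x))) ∂μ)
    (hint : ∀ f : X → ℝ, Integrable (fun x => η x * ψ (f x)) μ ∧
                 Integrable (fun x => (1 - η x) * ψ (-(f x))) μ) :
    (∀ p a b : ℝ, p ∈ Set.Icc (0:ℝ) 1 →
        ((1 - τ) * p + τ * (1 - p)) * a + ((1 - τ) * (1 - p) + τ * p) * b =
          (1 - 2*τ) * (p * a + (1 - p) * b) + τ * (a + b)) ∧
    (∀ f, noisyRisk f = (1 - 2*τ) * cleanRisk f + τ * K) ∧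
    (∀ g, (∀ f, noisyRisk g ≤ noisyRisk f) ↔ (∀ f, cleanRisk g ≤ cleanRisk f)) := by
  have key : ∀ f, noisyRisk f = (1 - 2*τ) * cleanRisk f + τ * K := by
    intro f
    have hi := hint f
    have hclean_int : Integrable (fun x => η x * ψ (f x) + (1 - η x) * ψ (-(f x))) μ :=
      hi.1.add hi.2
    have heq : (fun x => ((1 - τ) * η x + τ * (1 - η x)) * ψ (f x) +
            ((1 - τ) * (1 - η x) + τ * η x) * ψ (-(f x)))
        = fun x => (1 - 2*τ) * (η x * ψ (f x) + (1 - η x) * ψ (-(f x))) + τ * K := by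
      funext x
      have := hK (f x)
      ring_nf
      nlinarith [hK (f x)]
    rw [hnoisy f, heq, integral_add (hclean_int.const_mul _) (integrable_const _),
      integral_const_mul, integral_const, probReal_univ, hclean f]
    simp
  refine ⟨fun p a b hp => by ring, key, fun g => ?_⟩
  have hpos : (0:ℝ) < 1 - 2*τ := by linarith
  constructor
  · intro h f
    have := h f
    rw [key g, key f] at this
    nlinarith
  · intro h f
    rw [key g, key f]
    nlinarith [h f]
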